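/- Let a₁, a₂ be positive integers coprime to a positive integer b. Then 4·I(a₁,b) ≡ 4·I(a₂,b) (mod b) if and only if 12·s(a₁,b) - 12·s(a₂,b) is an integer. -/

import Mathlib

open Finset

/-- The sawtooth function ((x)) = x - ⌊x⌋ - 1/2 for non-integer x, and 0 for integer x. -/
def saw (x : ℚ) : ℚ := if x.den = 1 then 0 else x - ⌊x⌋ - 1/2

/-- The Dedekind sum s(a,b) = Σ_{k=1}^{b-1} ((k/b))((ka/b)). -/
def dedekindSum (a b : ℕ) : ℚ :=
  ∑ k ∈ Finset.range b, saw ((k : ℚ) / b) * saw ((k * a : ℚ) / b)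

/-- I(a,b): the number of inversions of the permutation x ↦ ax mod b on {0,...,b-1}. -/
def inv' (a b : ℕ) : ℕ :=
  (((Finset.range b) ×ˢ (Finset.range b)).filter
    (fun p => p.1 < p.2 ∧ (a * p.2) % b < (a * p.1) % b)).card

lemma saw_of_not_dvd (b m : ℕ) (hb : 0 < b) (h : ¬ b ∣ m) :
    saw ((m : ℚ) / b) = ((m % b : ℕ) : ℚ) / b - 1/2 := by
  have hb' : (b : ℚ) ≠ 0 := by positivity
  set r := m % b with hr
  set q := m / b with hq
  have hrb : r < b := Nat.mod_lt _ hb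
  have hr0 : 0 < r := Nat.pos_of_ne_zero (fun h0 => h (Nat.dvd_of_mod_eq_zero h0))
  have hm : (m : ℚ) = b * q + r := by exact_mod_cast (Nat.div_add_mod m b).symm
  have hx : (m : ℚ) / b = q + (r : ℚ) / b := by rw [hm]; field_simp
  have hfrac0 : (0:ℚ) < (r:ℚ)/b := by positivity
  have hfrac1 : (r:ℚ)/b < 1 := by
    rw [div_lt_one (by positivity)]; exact_mod_cast hrb
  have hfloor : ⌊(m : ℚ) / b⌋ = q := by
    rw [hx, show ((q:ℚ) + (r:ℚ)/b) = ((q:ℤ):ℚ) + (r:ℚ)/b by push_cast; ring,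
      Int.floor_intCast_add]
    have : ⌊(r:ℚ)/b⌋ = 0 := Int.floor_eq_zero_iff.mpr ⟨le_of_lt hfrac0, hfrac1⟩
    omega
  have hden : ((m : ℚ) / b).den ≠ 1 := by
    intro hd
    have h1 : ((((m:ℚ)/b).num : ℚ)) = (m:ℚ)/b := (Rat.den_eq_one_iff _).mp hd
    set z := ((m:ℚ)/b).num
    have h2 : (m : ℚ) = z * b := by field_simp at h1; linarith [h1]
    have h3 : (m : ℤ) = z * b := by exact_mod_cast h2
    exact h ((Int.natCast_dvd_natCast).mp ⟨z, by rw [h3]; ring⟩)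
  unfold saw
  rw [if_neg hden, hfloor, hx]
  push_cast
  ring

lemma sum_mod_eq (a b : ℕ) (h : Nat.Coprime a b) :
    ∑ k ∈ range b, (k * a % b) = ∑ k ∈ range b, k := by
  rcases Nat.lt_or_ge b 2 with hb | hb
  · interval_cases b <;> simp
  obtain ⟨c, -, hc⟩ := Nat.exists_mul_mod_eq_one_of_coprime h hb
  have hb0 : 0 < b := by omega
  refine Finset.sum_nbij' (i := fun k => k * a % b) (j := fun k => k * c % b) ?_ ?_ ?_ ?_ ?_
  · intro x hx; exact mem_range.mpr (Nat.mod_lt _ hb0)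
  · intro x hx; exact mem_range.mpr (Nat.mod_lt _ hb0)
  · intro x hx
    have hx' : x < b := mem_range.mp hx
    calc (x * a % b) * c % b = x * a * c % b := by
          rw [Nat.mod_mul_mod]
        _ = x % b * (a * c % b) % b := by rw [mul_assoc, Nat.mul_mod]
        _ = x := by rw [hc, mul_one, Nat.mod_eq_of_lt hx', Nat.mod_eq_of_lt hx']
  · intro x hx
    have hx' : x < b := mem_range.mp hx
    calc (x * c % b) * a % b = x * c * a % b := by rw [Nat.mod_mul_mod]
        _ = x % b * (a * c % b) % b := by rw [mul_assoc, mul_comm c a, Nat.mul_mod]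
        _ = x := by rw [hc, mul_one, Nat.mod_eq_of_lt hx', Nat.mod_eq_of_lt hx']
  · intro x hx; rfl

lemma step_eq (a b i j : ℕ) (hij : i < j) (hj : j < b) :
    ((j * a % b : ℕ) : ℤ) - ((i * a % b : ℕ) : ℤ) =
      (((j - i) * a % b : ℕ) : ℤ) - b * (if j * a % b < i * a % b then 1 else 0) := by
  have hb : 0 < b := by omega
  set rj := j * a % b with hrj
  set ri := i * a % b with hri
  set rd := (j - i) * a % b with hrd
  have h1 : rj < b := Nat.mod_lt _ hb
  have h2 : ri < b := Nat.mod_lt _ hb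
  have h3 : rd < b := Nat.mod_lt _ hb
  have key : (b : ℤ) ∣ ((rj : ℤ) - ri - rd) := by
    have e1 : (rj : ℤ) = (j * a : ℤ) % b := by rw [hrj]; push_cast [Int.natCast_mod]; rfl
    have e2 : (ri : ℤ) = (i * a : ℤ) % b := by rw [hri]; push_cast [Int.natCast_mod]; rfl
    have e3 : (rd : ℤ) = (((j:ℤ) - i) * a) % b := by
      rw [hrd]
      have h4 : (((j - i) * a : ℕ) : ℤ) = ((j:ℤ) - i) * a := by
        push_cast [Nat.cast_sub hij.le]; ring
      rw [Int.natCast_mod, h4]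
    rw [e1, e2, e3]
    have m1 : (j * a : ℤ) % b ≡ j * a [ZMOD b] := Int.emod_emod_of_dvd _ dvd_rfl
    have m2 : (i * a : ℤ) % b ≡ i * a [ZMOD b] := Int.emod_emod_of_dvd _ dvd_rfl
    have m3 : (((j:ℤ) - i) * a) % b ≡ ((j:ℤ) - i) * a [ZMOD b] :=
      Int.emod_emod_of_dvd _ dvd_rfl
    have hm := (m1.sub m2).sub m3
    have h0 : (j * a : ℤ) - i * a - ((j:ℤ) - i) * a = 0 := by ring
    exact (Int.modEq_zero_iff_dvd).mp (hm.trans (by rw [h0]))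
  split <;> rename_i hcase
  · have hd : (b : ℤ) ∣ ((rj : ℤ) - ri - rd + b) := dvd_add key (dvd_refl _)
    have hz : ((rj : ℤ) - ri - rd + b) = 0 := by
      refine Int.eq_zero_of_abs_lt_dvd hd ?_
      rw [abs_lt]; constructor <;> [omega; omega]
    omega
  · have hz : ((rj : ℤ) - ri - rd) = 0 := by
      refine Int.eq_zero_of_abs_lt_dvd key ?_
      rw [abs_lt]; constructor <;> [omega; omega]
    omega

lemma sum_swap_coeff (b : ℕ) (f : ℕ → ℤ) :
    ∑ j ∈ range b, ∑ i ∈ range j, f i = ∑ i ∈ range b, ((b : ℤ) - 1 - i) * f i := by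
  induction b with
  | zero => simp
  | succ n ih =>
    rw [Finset.sum_range_succ, ih, Finset.sum_range_succ, ← Finset.sum_add_distrib]
    push_cast
    rw [show ((n:ℤ) + 1 - 1 - n) * f n = 0 by ring, add_zero]
    exact Finset.sum_congr rfl fun i _ => by ring

lemma inv'_eq_double (a b : ℕ) :
    (inv' a b : ℤ) = ∑ j ∈ range b, ∑ i ∈ range j,
      (if j * a % b < i * a % b then (1:ℤ) else 0) := by
  unfold inv'
  rw [Finset.card_filter]
  push_cast
  rw [Finset.sum_product]
  rw [Finset.sum_comm]
  refine Finset.sum_congr rfl fun j hj => ?_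
  have hjb : j < b := mem_range.mp hj
  rw [show (range j) = (range b) ∩ (range j) by
    ext x; simp [Finset.mem_inter]; omega]
  rw [← Finset.sum_ite_mem]
  refine Finset.sum_congr rfl fun i _ => ?_
  by_cases h1 : i ∈ range j
  · rw [if_pos h1]
    have : i < j := mem_range.mp h1
    by_cases h2 : a * j % b < a * i % b
    · rw [if_pos ⟨this, h2⟩, if_pos (by rwa [mul_comm j a, mul_comm i a])]
    · rw [if_neg (by tauto), if_neg (by rwa [mul_comm j a, mul_comm i a])]
  · rw [if_neg h1, if_neg]
    rintro ⟨hlt, -⟩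
    exact h1 (mem_range.mpr hlt)

lemma grand (a b : ℕ) (hb : 0 < b) (h : Nat.Coprime a b) :
    3 * (∑ k ∈ range b, (k : ℤ) * (k * a % b : ℕ)) + b * inv' a b
      = (2 * b - 1) * ∑ k ∈ range b, (k : ℤ) := by
  set r : ℕ → ℤ := fun k => ((k * a % b : ℕ) : ℤ) with hrdef
  set S : ℤ := ∑ k ∈ range b, (k : ℤ) * r k with hS
  set R : ℤ := ∑ k ∈ range b, r k with hR
  have eval1 : ∑ j ∈ range b, ∑ i ∈ range j, (r j - r i)
      = 2 * S - ((b : ℤ) - 1) * R := by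
    have h1 : ∀ j ∈ range b, ∑ i ∈ range j, (r j - r i)
        = (j : ℤ) * r j - ∑ i ∈ range j, r i := by
      intro j _
      rw [Finset.sum_sub_distrib, Finset.sum_const, Finset.card_range,
        nsmul_eq_mul]
    rw [Finset.sum_congr rfl h1, Finset.sum_sub_distrib, sum_swap_coeff]
    have h2 : ∑ i ∈ range b, ((b:ℤ) - 1 - i) * r i
        = ((b:ℤ) - 1) * R - S := by
      rw [hS, hR, Finset.mul_sum, ← Finset.sum_sub_distrib]
      exact Finset.sum_congr rfl fun i _ => by ring
    rw [h2, hS]; ring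
  have eval2 : ∑ j ∈ range b, ∑ i ∈ range j, (r j - r i)
      = ((b : ℤ) * R - S) - b * inv' a b := by
    have h1 : ∀ j ∈ range b, ∑ i ∈ range j, (r j - r i)
        = ∑ i ∈ range j, (r (i + 1) - b * (if j * a % b < i * a % b then 1 else 0)) := by
      intro j hj
      have hjb := mem_range.mp hj
      have e1 : ∑ i ∈ range j, (r j - r i)
          = ∑ i ∈ range j, (r (j - i) - b * (if j * a % b < i * a % b then 1 else 0)) :=
        Finset.sum_congr rfl fun i hi => step_eq a b i j (mem_range.mp hi) hjb
      rw [e1, Finset.sum_sub_distrib, Finset.sum_sub_distrib]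
      congr 1
      rw [← Finset.sum_range_reflect (fun i => r (i + 1)) j]
      exact Finset.sum_congr rfl fun i hi => by
        congr 1; have := mem_range.mp hi; omega
    rw [Finset.sum_congr rfl h1]
    have h2 : ∀ j ∈ range b, ∑ i ∈ range j,
        (r (i + 1) - b * (if j * a % b < i * a % b then 1 else 0))
        = (∑ i ∈ range j, r (i + 1))
          - b * ∑ i ∈ range j, (if j * a % b < i * a % b then (1:ℤ) else 0) := by
      intro j _
      rw [Finset.sum_sub_distrib, Finset.mul_sum]
    rw [Finset.sum_congr rfl h2, Finset.sum_sub_distrib]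
    congr 1
    · rw [sum_swap_coeff]
      have hV1 : ∑ k ∈ range (b + 1), ((b:ℤ) - k) * r k
          = ∑ i ∈ range b, ((b:ℤ) - 1 - i) * r (i + 1) := by
        rw [Finset.sum_range_succ' (fun k => ((b:ℤ) - k) * r k) b]
        have hr0 : r 0 = 0 := by simp [hrdef]
        rw [hr0]
        push_cast
        rw [mul_zero, add_zero]
        exact Finset.sum_congr rfl fun i _ => by push_cast; ring
      have hV2 : ∑ k ∈ range (b + 1), ((b:ℤ) - k) * r k = (b:ℤ) * R - S := by
        rw [Finset.sum_range_succ]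
        rw [show ((b:ℤ) - b) * r b = 0 by ring, add_zero, hS, hR,
          Finset.mul_sum, ← Finset.sum_sub_distrib]
        exact Finset.sum_congr rfl fun i _ => by ring
      rw [← hV1, hV2]
    · rw [← Finset.mul_sum, inv'_eq_double]
  have hRk : R = ∑ k ∈ range b, (k : ℤ) := by
    rw [hR, hrdef]
    calc ∑ k ∈ range b, ((k * a % b : ℕ) : ℤ)
        = ((∑ k ∈ range b, k * a % b : ℕ) : ℤ) := (Nat.cast_sum _ _).symm
      _ = ((∑ k ∈ range b, k : ℕ) : ℤ) := by rw [sum_mod_eq a b h]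
      _ = ∑ k ∈ range b, (k : ℤ) := Nat.cast_sum _ _
  have := eval1.symm.trans eval2
  rw [hRk] at this
  linarith [this]

lemma ded_formula (a b : ℕ) (hb : 0 < b) (h : Nat.Coprime a b) :
    4 * (b : ℚ)^2 * dedekindSum a b
      = 4 * (∑ k ∈ range b, (k : ℚ) * ((k * a % b : ℕ) : ℚ)) - (b:ℚ)^2 * ((b:ℚ) - 1) := by
  have hb' : (b : ℚ) ≠ 0 := by positivity
  have hterm : ∀ k ∈ range b,
      4 * (b : ℚ)^2 * (saw ((k : ℚ) / b) * saw ((k * a : ℚ) / b))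
        = (2 * (k:ℚ) - b) * (2 * ((k * a % b : ℕ) : ℚ) - b)
          - (if k = 0 then (b:ℚ)^2 else 0) := by
    intro k hk
    have hkb := mem_range.mp hk
    by_cases hk0 : k = 0
    · subst hk0
      have hsaw0 : saw ((0 : ℚ)) = 0 := by simp [saw]
      simp [hsaw0, Nat.zero_mod]
      ring
    · have hkpos : 0 < k := Nat.pos_of_ne_zero hk0
      have hdvd1 : ¬ b ∣ k := fun hd => by
        have := Nat.le_of_dvd hkpos hd; omega
      have hdvd2 : ¬ b ∣ k * a := fun hd => hdvd1 (h.symm.dvd_of_dvd_mul_right hd)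
      have e1 : saw ((k : ℚ) / b) = (k : ℚ) / b - 1/2 := by
        rw [saw_of_not_dvd b k hb hdvd1, Nat.mod_eq_of_lt hkb]
      have e2 : saw ((k * a : ℚ) / b) = ((k * a % b : ℕ) : ℚ) / b - 1/2 := by
        rw [show ((k : ℚ) * a) = ((k * a : ℕ) : ℚ) by push_cast; ring]
        exact saw_of_not_dvd b (k * a) hb hdvd2
      rw [e1, e2, if_neg hk0]
      field_simp
      ring
  unfold dedekindSum
  rw [Finset.mul_sum, Finset.sum_congr rfl hterm, Finset.sum_sub_distrib]
  have hif : ∑ k ∈ range b, (if k = 0 then (b:ℚ)^2 else 0) = (b:ℚ)^2 := by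
    rw [Finset.sum_ite_eq' (range b) 0 (fun _ => (b:ℚ)^2), if_pos (mem_range.mpr hb)]
  rw [hif]
  have hexp : ∑ k ∈ range b, (2 * (k:ℚ) - b) * (2 * ((k * a % b : ℕ) : ℚ) - b)
      = 4 * (∑ k ∈ range b, (k : ℚ) * ((k * a % b : ℕ) : ℚ))
        - 2 * b * (∑ k ∈ range b, (k:ℚ))
        - 2 * b * (∑ k ∈ range b, ((k * a % b : ℕ) : ℚ)) + b * (b:ℚ)^2 := by
    calc ∑ k ∈ range b, (2 * (k:ℚ) - b) * (2 * ((k * a % b : ℕ) : ℚ) - b)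
        = ∑ k ∈ range b, ((4 * ((k:ℚ) * ((k * a % b : ℕ) : ℚ))
            - 2 * b * (k:ℚ) - 2 * b * ((k * a % b : ℕ) : ℚ)) + (b:ℚ)^2) :=
          Finset.sum_congr rfl fun k _ => by ring
      _ = _ := by
          rw [Finset.sum_add_distrib, Finset.sum_sub_distrib, Finset.sum_sub_distrib,
            Finset.sum_const, Finset.card_range, nsmul_eq_mul,
            ← Finset.mul_sum, ← Finset.mul_sum, ← Finset.mul_sum]
  rw [hexp]
  have hR : (∑ k ∈ range b, ((k * a % b : ℕ) : ℚ)) = ∑ k ∈ range b, (k:ℚ) := by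
    calc ∑ k ∈ range b, ((k * a % b : ℕ) : ℚ)
        = ((∑ k ∈ range b, k * a % b : ℕ) : ℚ) := (Nat.cast_sum _ _).symm
      _ = ((∑ k ∈ range b, k : ℕ) : ℚ) := by rw [sum_mod_eq a b h]
      _ = ∑ k ∈ range b, (k : ℚ) := Nat.cast_sum _ _
  have hgauss : (∑ k ∈ range b, (k:ℚ)) * 2 = (b:ℚ) * ((b:ℚ) - 1) := by
    have h1 : (∑ i ∈ range b, i) * 2 = b * (b - 1) := Finset.sum_range_id_mul_two b
    have h2 : ((∑ i ∈ range b, i : ℕ) : ℚ) * 2 = (((b * (b - 1) : ℕ)) : ℚ) := by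
      exact_mod_cast congrArg (fun n : ℕ => (n : ℚ)) h1
    rw [Nat.cast_sum, Nat.cast_mul, Nat.cast_sub (by omega : 1 ≤ b)] at h2
    simpa using h2
  rw [hR]
  linear_combination (-2 * (b:ℚ)) * hgauss

theorem four_inv_congr_iff_twelve_int (a₁ a₂ b : ℕ) (ha₁ : 0 < a₁) (ha₂ : 0 < a₂) (hb : 0 < b)
    (h₁ : Nat.Coprime a₁ b) (h₂ : Nat.Coprime a₂ b) :
    (4 * inv' a₁ b : ℤ) ≡ 4 * inv' a₂ b [ZMOD (b : ℤ)] ↔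
      ∃ n : ℤ, 12 * dedekindSum a₁ b - 12 * dedekindSum a₂ b = n := by
  have hb' : (b : ℚ) ≠ 0 := by positivity
  set I₁ := inv' a₁ b
  set I₂ := inv' a₂ b
  -- the nat sums
  set S₁ : ℕ := ∑ k ∈ range b, k * (k * a₁ % b) with hS₁
  set S₂ : ℕ := ∑ k ∈ range b, k * (k * a₂ % b) with hS₂
  have cast1 : ∀ a : ℕ, ((∑ k ∈ range b, k * (k * a % b) : ℕ) : ℤ)
      = ∑ k ∈ range b, (k : ℤ) * ((k * a % b : ℕ) : ℤ) := by
    intro a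
    rw [Nat.cast_sum]
    exact Finset.sum_congr rfl fun k _ => by push_cast; ring
  have cast2 : ∀ a : ℕ, ((∑ k ∈ range b, k * (k * a % b) : ℕ) : ℚ)
      = ∑ k ∈ range b, (k : ℚ) * ((k * a % b : ℕ) : ℚ) := by
    intro a
    rw [Nat.cast_sum]
    exact Finset.sum_congr rfl fun k _ => by push_cast; ring
  have g1 := grand a₁ b hb h₁
  have g2 := grand a₂ b hb h₂
  rw [← cast1 a₁] at g1
  rw [← cast1 a₂] at g2
  have gz : 3 * ((S₁ : ℕ) : ℤ) - 3 * ((S₂ : ℕ) : ℤ)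
      = (b : ℤ) * I₂ - (b : ℤ) * I₁ := by
    rw [hS₁, hS₂]; linarith [g1, g2]
  have gq : 3 * ((S₁ : ℕ) : ℚ) - 3 * ((S₂ : ℕ) : ℚ)
      = (b : ℚ) * I₂ - (b : ℚ) * I₁ := by exact_mod_cast gz
  have d1 := ded_formula a₁ b hb h₁
  have d2 := ded_formula a₂ b hb h₂
  rw [← cast2 a₁, ← hS₁] at d1
  rw [← cast2 a₂, ← hS₂] at d2
  have hQ : 12 * dedekindSum a₁ b - 12 * dedekindSum a₂ b
      = (4 * (I₂ : ℚ) - 4 * (I₁ : ℚ)) / b := by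
    rw [eq_div_iff hb']
    have key : (12 * dedekindSum a₁ b - 12 * dedekindSum a₂ b) * (b:ℚ)^2
        = (4 * (I₂ : ℚ) - 4 * (I₁ : ℚ)) * b := by
      linear_combination 3 * d1 - 3 * d2 + 4 * gq
    exact mul_right_cancel₀ hb' (by linear_combination key)
  constructor
  · intro hmod
    have hdvd : (b : ℤ) ∣ (4 * (I₂ : ℤ) - 4 * (I₁ : ℤ)) := hmod.dvd
    obtain ⟨t, ht⟩ := hdvd
    refine ⟨t, ?_⟩
    rw [hQ]
    have htq : (4 * (I₂ : ℚ) - 4 * (I₁ : ℚ)) = (b : ℚ) * t := by exact_mod_cast ht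
    rw [htq]
    field_simp
  · rintro ⟨n, hn⟩
    rw [hQ, div_eq_iff hb'] at hn
    have hz : 4 * (I₂ : ℤ) - 4 * (I₁ : ℤ) = n * b := by exact_mod_cast hn
    exact (Int.modEq_iff_dvd.mpr ⟨-n, by linear_combination -hz⟩).symm
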